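/- On the unit sphere S² in E³, let Q be a quarter of a spherical disk of (spherical) radius Δ ∈ (0, π/2): the spherical convex hull of a center point c and two points a, b with |ca| = |cb| = Δ and the angle at c between the arcs ca and cb equal to π/2. Then the circumradius of Q (the smallest ρ such that Q is contained in a spherical disk of radius ρ) equals arctan(√2 · tan(Δ/2)). -/

import Mathlib

open scoped RealInnerProductSpace

/-- Spherical distance between unit vectors of `E³`. -/
noncomputable def sdist (p q : EuclideanSpace ℝ (Fin 3)) : ℝ := Real.arccos ⟪p, q⟫

set_option maxHeartbeats 1000000
theorem stmt7 (Δ : ℝ) (hΔ : Δ ∈ Set.Ioo 0 (Real.pi / 2))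
    (a b c : EuclideanSpace ℝ (Fin 3))
    (ha : ‖a‖ = 1) (hb : ‖b‖ = 1) (hc : ‖c‖ = 1)
    (hca : sdist c a = Δ) (hcb : sdist c b = Δ)
    (hright : ⟪a - ⟪a, c⟫ • c, b - ⟪b, c⟫ • c⟫ = 0)
    (Q : Set (EuclideanSpace ℝ (Fin 3)))
    (hQ : Q = {p | ∃ x ∈ convexHull ℝ ({c, a, b} : Set (EuclideanSpace ℝ (Fin 3))),
      x ≠ 0 ∧ p = ‖x‖⁻¹ • x}) :
    sInf {ρ : ℝ | ∃ o : EuclideanSpace ℝ (Fin 3), ‖o‖ = 1 ∧ ∀ p ∈ Q, sdist o p ≤ ρ}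
      = Real.arctan (Real.sqrt 2 * Real.tan (Δ / 2)) := by
  obtain ⟨hΔ0, hΔπ⟩ := hΔ
  have hπ := Real.pi_pos
  set k := Real.cos Δ with hkdef
  clear_value k
  have hk0 : 0 < k := by rw [hkdef]; exact Real.cos_pos_of_mem_Ioo ⟨by linarith, hΔπ⟩
  have hk1 : k < 1 := by
    rw [hkdef]
    have := Real.cos_lt_cos_of_nonneg_of_le_pi le_rfl (by linarith) hΔ0
    simpa using this
  -- inner products of the three points
  have hcc : ⟪c, c⟫ = 1 := by
    rw [real_inner_self_eq_norm_sq, hc]; norm_num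
  have haa : ⟪a, a⟫ = 1 := by
    rw [real_inner_self_eq_norm_sq, ha]; norm_num
  have hbb : ⟪b, b⟫ = 1 := by
    rw [real_inner_self_eq_norm_sq, hb]; norm_num
  have hbound : ∀ u w : EuclideanSpace ℝ (Fin 3), ‖u‖ = 1 → ‖w‖ = 1 →
      -1 ≤ ⟪u, w⟫ ∧ ⟪u, w⟫ ≤ 1 := by
    intro u w hu hw
    have h := abs_real_inner_le_norm u w
    rw [hu, hw] at h
    constructor <;> [linarith [neg_abs_le (⟪u, w⟫ : ℝ)]; linarith [le_abs_self (⟪u, w⟫ : ℝ)]]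
  unfold sdist at hca hcb
  have hca' : ⟪c, a⟫ = k := by
    obtain ⟨h1, h2⟩ := hbound c a hc ha
    have : Real.cos (Real.arccos ⟪c, a⟫) = Real.cos Δ := by exact congrArg Real.cos hca
    rwa [Real.cos_arccos h1 h2, ← hkdef] at this
  have hcb' : ⟪c, b⟫ = k := by
    obtain ⟨h1, h2⟩ := hbound c b hc hb
    have : Real.cos (Real.arccos ⟪c, b⟫) = Real.cos Δ := by exact congrArg Real.cos hcb
    rwa [Real.cos_arccos h1 h2, ← hkdef] at this
  have hac' : ⟪a, c⟫ = k := by rw [real_inner_comm]; exact hca'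
  have hbc' : ⟪b, c⟫ = k := by rw [real_inner_comm]; exact hcb'
  have hab' : ⟪a, b⟫ = k ^ 2 := by
    simp only [inner_sub_left, inner_sub_right, real_inner_smul_left,
      real_inner_smul_right] at hright
    rw [real_inner_comm b a] at hright
    rw [hac', hbc', hcc, hcb'] at hright
    nlinarith [hright, real_inner_comm a b]
  -- the circumcenter direction
  have h1k : (1 : ℝ) - k ≠ 0 := by linarith
  set μ : ℝ := (1 - k)⁻¹ with hμdef
  clear_value μ
  have hμ0 : 0 < μ := by rw [hμdef]; exact inv_pos.mpr (by linarith)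
  set T : ℝ := (1 + k) / (1 - k) with hTdef
  clear_value T
  have hT0 : 0 < T := by rw [hTdef]; exact div_pos (by linarith) (by linarith)
  set v : EuclideanSpace ℝ (Fin 3) := c + μ • (a + b) with hvdef
  clear_value v
  have e1 : 1 + μ * (k + k) = T := by rw [hTdef, hμdef]; field_simp; ring
  have e2 : k + μ * (1 + k ^ 2) = T := by rw [hTdef, hμdef]; field_simp; ring
  have hba' : ⟪b, a⟫ = k ^ 2 := by rw [real_inner_comm]; exact hab'
  have hvc : ⟪v, c⟫ = T := by
    rw [hvdef, inner_add_left, real_inner_smul_left, inner_add_left]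
    simp only [hcc, haa, hbb, hca', hcb', hac', hbc', hab', hba']
    linarith [e1]
  have hva : ⟪v, a⟫ = T := by
    rw [hvdef, inner_add_left, real_inner_smul_left, inner_add_left]
    simp only [hcc, haa, hbb, hca', hcb', hac', hbc', hab', hba']
    linarith [e2]
  have hvb : ⟪v, b⟫ = T := by
    rw [hvdef, inner_add_left, real_inner_smul_left, inner_add_left]
    simp only [hcc, haa, hbb, hca', hcb', hac', hbc', hab', hba']
    linarith [e2]
  have hov : ∀ u : EuclideanSpace ℝ (Fin 3),
      ⟪u, v⟫ = ⟪u, c⟫ + μ * (⟪u, a⟫ + ⟪u, b⟫) := by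
    intro u
    rw [hvdef, inner_add_right, real_inner_smul_right, inner_add_right]
  have hvv : ⟪v, v⟫ = (1 + 2 * μ) * T := by
    have h := hov v
    rw [hvc, hva, hvb] at h
    rw [h]; ring
  have hnv2 : ‖v‖ ^ 2 = (1 + 2 * μ) * T := by
    rw [← real_inner_self_eq_norm_sq, hvv]
  have hnv0 : 0 < ‖v‖ := by
    have h2 : 0 < ‖v‖ ^ 2 := by rw [hnv2]; positivity
    nlinarith [norm_nonneg v]
  have hnvne : ‖v‖ ≠ 0 := ne_of_gt hnv0
  set o : EuclideanSpace ℝ (Fin 3) := ‖v‖⁻¹ • v with hodef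
  clear_value o
  have hno : ‖o‖ = 1 := by
    rw [hodef, norm_smul, norm_inv, norm_norm, inv_mul_cancel₀ hnvne]
  -- the claimed circumradius
  set ρ : ℝ := Real.arctan (Real.sqrt 2 * Real.tan (Δ / 2)) with hρdef
  clear_value ρ
  have htanpos : 0 < Real.tan (Δ / 2) :=
    Real.tan_pos_of_pos_of_lt_pi_div_two (by linarith) (by linarith)
  have hρ0 : 0 ≤ ρ := by
    rw [hρdef, ← Real.arctan_zero]
    exact Real.arctan_strictMono.monotone (by positivity)
  have hρπ2 : ρ < Real.pi / 2 := by rw [hρdef]; exact Real.arctan_lt_pi_div_two _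
  have hcosρpos : 0 < Real.cos ρ := by rw [hρdef]; exact Real.cos_arctan_pos _
  -- cos ρ ^ 2 = (1+k)/(3-k)
  have htansq : Real.tan (Δ / 2) ^ 2 = (1 - k) / (1 + k) := by
    have hcoshalf : Real.cos (Δ / 2) ^ 2 = (1 + k) / 2 := by
      rw [Real.cos_sq]
      rw [show 2 * (Δ / 2) = Δ by ring]
      rw [hkdef]; ring
    have hsinhalf : Real.sin (Δ / 2) ^ 2 = (1 - k) / 2 := by
      have := Real.sin_sq_add_cos_sq (Δ / 2)
      rw [hcoshalf] at this
      linarith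
    have hch0 : Real.cos (Δ / 2) ≠ 0 := by
      have : 0 < Real.cos (Δ / 2) := Real.cos_pos_of_mem_Ioo ⟨by linarith, by linarith⟩
      exact ne_of_gt this
    have h1k' : (1:ℝ) + k ≠ 0 := by linarith
    rw [Real.tan_eq_sin_div_cos, div_pow, hsinhalf, hcoshalf]
    rw [div_div_div_comm]
    norm_num
  have hcossq : Real.cos ρ ^ 2 = (1 + k) / (3 - k) := by
    rw [hρdef, Real.cos_sq_arctan, mul_pow, Real.sq_sqrt (by norm_num : (0:ℝ) ≤ 2), htansq]
    have h3k : (3:ℝ) - k ≠ 0 := by linarith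
    have h1k' : (1:ℝ) + k ≠ 0 := by linarith
    have hden : (0:ℝ) < 1 + 2 * ((1 - k) / (1 + k)) := by
      have := div_pos (show (0:ℝ) < 1 - k by linarith) (show (0:ℝ) < 1 + k by linarith)
      linarith
    rw [div_eq_div_iff (ne_of_gt hden) h3k]
    have hcancel : (1 - k) / (1 + k) * (1 + k) = 1 - k := div_mul_cancel₀ _ h1k'
    linear_combination (-2 : ℝ) * hcancel
  -- key identity: cos ρ * ‖v‖ = T
  have h3k : (3:ℝ) - k ≠ 0 := by linarith
  have hkey : Real.cos ρ * ‖v‖ = T := by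
    have hsq : (Real.cos ρ * ‖v‖) ^ 2 = T ^ 2 := by
      rw [mul_pow, hcossq, hnv2, hTdef, hμdef]
      field_simp
      ring
    have h1 : Real.cos ρ * ‖v‖ = Real.sqrt ((Real.cos ρ * ‖v‖) ^ 2) := by
      rw [Real.sqrt_sq (by positivity)]
    rw [h1, hsq, Real.sqrt_sq (le_of_lt hT0)]
  have hsum : (1 + 2 * μ) * Real.cos ρ = ‖v‖ := by
    have h := hnv2
    rw [← hkey] at h
    have h2 : ‖v‖ ^ 2 = ((1 + 2 * μ) * Real.cos ρ) * ‖v‖ := by rw [h]; ring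
    have := mul_right_cancel₀ hnvne (by rw [← h2]; ring : ‖v‖ * ‖v‖ = ((1 + 2 * μ) * Real.cos ρ) * ‖v‖)
    linarith [this]
  have hoc : ⟪o, c⟫ = Real.cos ρ := by
    rw [hodef, real_inner_smul_left, hvc, ← hkey]
    field_simp
  have hoa : ⟪o, a⟫ = Real.cos ρ := by
    rw [hodef, real_inner_smul_left, hva, ← hkey]
    field_simp
  have hob : ⟪o, b⟫ = Real.cos ρ := by
    rw [hodef, real_inner_smul_left, hvb, ← hkey]
    field_simp
  -- membership of the three vertices in Q
  have hmem : ∀ u : EuclideanSpace ℝ (Fin 3), ‖u‖ = 1 →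
      u ∈ ({c, a, b} : Set (EuclideanSpace ℝ (Fin 3))) → u ∈ Q := by
    intro u hu humem
    rw [hQ]
    refine ⟨u, subset_convexHull ℝ _ humem, ?_, ?_⟩
    · intro h0; rw [h0] at hu; simp at hu
    · rw [hu]; simp
  have hcQ : c ∈ Q := hmem c hc (by simp)
  have haQ : a ∈ Q := hmem a ha (by simp)
  have hbQ : b ∈ Q := hmem b hb (by simp)
  -- covering: every point of Q is within ρ of o
  have hρπ : ρ ≤ Real.pi := by linarith
  have hρS : ρ ∈ {ρ' : ℝ | ∃ o' : EuclideanSpace ℝ (Fin 3), ‖o'‖ = 1 ∧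
      ∀ p ∈ Q, sdist o' p ≤ ρ'} := by
    refine ⟨o, hno, ?_⟩
    intro p hp
    rw [hQ] at hp
    obtain ⟨x, hxhull, hx0, hpx⟩ := hp
    have hsub : convexHull ℝ ({c, a, b} : Set (EuclideanSpace ℝ (Fin 3))) ⊆
        {y : EuclideanSpace ℝ (Fin 3) | Real.cos ρ ≤ ⟪o, y⟫} ∩ Metric.closedBall 0 1 := by
      apply convexHull_min
      · rintro y (rfl | rfl | rfl)
        · exact ⟨le_of_eq hoc.symm, by simp [Metric.mem_closedBall, hc]⟩
        · exact ⟨le_of_eq hoa.symm, by simp [Metric.mem_closedBall, ha]⟩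
        · exact ⟨le_of_eq hob.symm, by simp [Metric.mem_closedBall, hb]⟩
      · refine Convex.inter ?_ (convex_closedBall 0 1)
        exact convex_halfSpace_ge ⟨fun x y => inner_add_right o x y,
          fun r x => real_inner_smul_right o x r⟩ (Real.cos ρ)
    obtain ⟨hxin, hxball⟩ := hsub hxhull
    have hxnorm : ‖x‖ ≤ 1 := by simpa [Metric.mem_closedBall] using hxball
    have hxpos : 0 < ‖x‖ := norm_pos_iff.mpr hx0
    have hinv1 : 1 ≤ ‖x‖⁻¹ := by
      rw [le_inv_comm₀]
      · simpa using hxnorm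
      · norm_num
      · exact hxpos
    have hxin' : Real.cos ρ ≤ ⟪o, x⟫ := hxin
    have hip : Real.cos ρ ≤ ⟪o, p⟫ := by
      rw [hpx, real_inner_smul_right]
      calc Real.cos ρ ≤ ⟪o, x⟫ := hxin'
      _ = 1 * ⟪o, x⟫ := by ring
      _ ≤ ‖x‖⁻¹ * ⟪o, x⟫ := by
          apply mul_le_mul_of_nonneg_right hinv1
          linarith [hxin', hcosρpos]
    show Real.arccos ⟪o, p⟫ ≤ ρ
    have hanti : Real.arccos ⟪o, p⟫ ≤ Real.arccos (Real.cos ρ) := by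
      rw [Real.arccos_eq_pi_div_two_sub_arcsin, Real.arccos_eq_pi_div_two_sub_arcsin]
      have := Real.monotone_arcsin (le_of_lt (lt_of_lt_of_le hcosρpos hip))
      linarith [Real.monotone_arcsin hip]
    calc Real.arccos ⟪o, p⟫ ≤ Real.arccos (Real.cos ρ) := hanti
    _ = ρ := Real.arccos_cos hρ0 hρπ
  -- lower bound: every ρ' in the set is at least ρ
  have hlb : ∀ ρ' ∈ {ρ' : ℝ | ∃ o' : EuclideanSpace ℝ (Fin 3), ‖o'‖ = 1 ∧
      ∀ p ∈ Q, sdist o' p ≤ ρ'}, ρ ≤ ρ' := by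
    rintro ρ' ⟨o', hno', hcov⟩
    have h1 := hcov c hcQ
    have h2 := hcov a haQ
    have h3 := hcov b hbQ
    rw [show sdist o' c = Real.arccos ⟪o', c⟫ from rfl] at h1
    rw [show sdist o' a = Real.arccos ⟪o', a⟫ from rfl] at h2
    rw [show sdist o' b = Real.arccos ⟪o', b⟫ from rfl] at h3
    have hρ'0 : 0 ≤ ρ' := le_trans (Real.arccos_nonneg _) h1
    by_cases hρ'π : ρ' ≤ Real.pi
    · -- inner products at least cos ρ'
      have key : ∀ u : EuclideanSpace ℝ (Fin 3), ‖u‖ = 1 →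
          Real.arccos ⟪o', u⟫ ≤ ρ' → Real.cos ρ' ≤ ⟪o', u⟫ := by
        intro u hu harc
        obtain ⟨hb1, hb2⟩ := hbound o' u hno' hu
        have := Real.cos_le_cos_of_nonneg_of_le_pi (Real.arccos_nonneg _) hρ'π harc
        rwa [Real.cos_arccos hb1 hb2] at this
      have k1 := key c hc h1
      have k2 := key a ha h2
      have k3 := key b hb h3
      have hov' := hov o'
      have hup : ⟪o', v⟫ ≤ ‖v‖ := by
        have := real_inner_le_norm o' v
        rwa [hno', one_mul] at this
      have hdown : (1 + 2 * μ) * Real.cos ρ' ≤ ⟪o', v⟫ := by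
        rw [hov']
        have m2 := mul_le_mul_of_nonneg_left k2 (le_of_lt hμ0)
        have m3 := mul_le_mul_of_nonneg_left k3 (le_of_lt hμ0)
        have : μ * (⟪o', a⟫ + ⟪o', b⟫) = μ * ⟪o', a⟫ + μ * ⟪o', b⟫ := by ring
        rw [this]
        linarith [k1, m2, m3]
      have hcc' : Real.cos ρ' ≤ Real.cos ρ := by
        rw [← hsum] at hup
        have h12μ : 0 < 1 + 2 * μ := by linarith
        have hchain : (1 + 2 * μ) * Real.cos ρ' ≤ (1 + 2 * μ) * Real.cos ρ :=
          le_trans hdown hup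
        exact le_of_mul_le_mul_left hchain h12μ
      by_contra hlt
      push_neg at hlt
      have := Real.cos_lt_cos_of_nonneg_of_le_pi hρ'0 hρπ hlt
      linarith
    · push_neg at hρ'π
      linarith [Real.pi_pos]
  -- conclude
  apply le_antisymm
  · exact csInf_le ⟨ρ, fun ρ' h => hlb ρ' h⟩ hρS
  · exact le_csInf ⟨ρ, hρS⟩ hlb
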